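/- Let n_C ≥ n_E be positive natural numbers, K_C an invertible n_C×n_C real matrix, K_E an invertible n_E×n_E real matrix, ρ ∈ ℝ, P the n_E×n_C matrix [I_{n_E} 0], and vectors a, y_C ∈ ℝ^{n_C}, b, y_E ∈ ℝ^{n_E}. Set M = [[K_C, ρ K_C Pᵀ], [ρ P K_C, ρ² P K_C Pᵀ + K_E]], k̃ = (ρa, ρ²Pa + b), ỹ = (y_C, y_E). Then k̃ᵀ M⁻¹ ỹ = ρ · aᵀ K_C⁻¹ y_C + bᵀ K_E⁻¹ (y_E − ρ P y_C); that is, the joint multi-fidelity predictive mean equals the recursive-formulation mean in the nested-design case. -/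
import Mathlib

open Matrix

theorem mufi_predictive_mean_nested_designs
    (nC nE : ℕ) (hnC : 0 < nC) (hnE : 0 < nE) (h : nE ≤ nC)
    (K_C : Matrix (Fin nC) (Fin nC) ℝ) (K_E : Matrix (Fin nE) (Fin nE) ℝ)
    (hC : IsUnit K_C.det) (hE : IsUnit K_E.det)
    (ρ : ℝ)
    (P : Matrix (Fin nE) (Fin nC) ℝ)
    (hP : ∀ i j, P i j = if Fin.castLE h i = j then 1 else 0)
    (a y_C : Fin nC → ℝ) (b y_E : Fin nE → ℝ) :
    let M : Matrix (Fin nC ⊕ Fin nE) (Fin nC ⊕ Fin nE) ℝ :=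
      Matrix.fromBlocks K_C (ρ • (K_C * Pᵀ)) (ρ • (P * K_C))
        (ρ ^ 2 • (P * K_C * Pᵀ) + K_E)
    let k : Fin nC ⊕ Fin nE → ℝ := Sum.elim (ρ • a) (ρ ^ 2 • (P *ᵥ a) + b)
    let y : Fin nC ⊕ Fin nE → ℝ := Sum.elim y_C y_E
    k ⬝ᵥ (M⁻¹ *ᵥ y) =
      ρ * (a ⬝ᵥ (K_C⁻¹ *ᵥ y_C)) + b ⬝ᵥ (K_E⁻¹ *ᵥ (y_E - ρ • (P *ᵥ y_C))) := by
  intro M k y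
  have hCi : K_C * K_C⁻¹ = 1 := mul_nonsing_inv _ hC
  have hEi : K_E * K_E⁻¹ = 1 := mul_nonsing_inv _ hE
  have hEc : ∀ X : Matrix (Fin nE) (Fin nC) ℝ, K_E * (K_E⁻¹ * X) = X := fun X => by
    rw [← Matrix.mul_assoc, hEi, Matrix.one_mul]
  set A : Matrix (Fin nC) (Fin nC) ℝ := K_C⁻¹ + ρ ^ 2 • (Pᵀ * K_E⁻¹ * P) with hA
  set N : Matrix (Fin nC ⊕ Fin nE) (Fin nC ⊕ Fin nE) ℝ :=
    Matrix.fromBlocks A (-(ρ • (Pᵀ * K_E⁻¹))) (-(ρ • (K_E⁻¹ * P))) K_E⁻¹ with hNdef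
  have TL : K_C * A + ρ • (K_C * Pᵀ) * -(ρ • (K_E⁻¹ * P)) = 1 := by
    simp only [hA, Matrix.mul_add, Matrix.mul_smul, Matrix.smul_mul, Matrix.mul_neg,
      Matrix.neg_mul, Matrix.mul_assoc, hCi, Matrix.mul_one, Matrix.one_mul]
    module
  have TR : K_C * -(ρ • (Pᵀ * K_E⁻¹)) + ρ • (K_C * Pᵀ) * K_E⁻¹ = 0 := by
    simp only [Matrix.mul_smul, Matrix.smul_mul, Matrix.mul_neg, Matrix.mul_assoc]
    module
  have BL : ρ • (P * K_C) * A + (ρ ^ 2 • (P * K_C * Pᵀ) + K_E) * -(ρ • (K_E⁻¹ * P)) = 0 := by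
    simp only [hA, Matrix.mul_add, Matrix.add_mul, Matrix.mul_smul, Matrix.smul_mul,
      Matrix.mul_neg, Matrix.neg_mul, Matrix.mul_assoc, hCi, hEc, Matrix.mul_one,
      Matrix.one_mul]
    module
  have BR : ρ • (P * K_C) * -(ρ • (Pᵀ * K_E⁻¹)) + (ρ ^ 2 • (P * K_C * Pᵀ) + K_E) * K_E⁻¹ = 1 := by
    simp only [Matrix.mul_add, Matrix.add_mul, Matrix.mul_smul, Matrix.smul_mul,
      Matrix.mul_neg, Matrix.neg_mul, Matrix.mul_assoc, hEi, Matrix.mul_one, Matrix.one_mul]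
    module
  have hMN : M * N = 1 := by
    rw [show M * N = Matrix.fromBlocks (K_C * A + ρ • (K_C * Pᵀ) * -(ρ • (K_E⁻¹ * P)))
        (K_C * -(ρ • (Pᵀ * K_E⁻¹)) + ρ • (K_C * Pᵀ) * K_E⁻¹)
        (ρ • (P * K_C) * A + (ρ ^ 2 • (P * K_C * Pᵀ) + K_E) * -(ρ • (K_E⁻¹ * P)))
        (ρ • (P * K_C) * -(ρ • (Pᵀ * K_E⁻¹)) + (ρ ^ 2 • (P * K_C * Pᵀ) + K_E) * K_E⁻¹)
      from Matrix.fromBlocks_multiply .., TL, TR, BL, BR, Matrix.fromBlocks_one]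
  have hMinv : M⁻¹ = N := inv_eq_right_inv hMN
  rw [hMinv, hNdef, hA]
  simp only [k, y, Matrix.fromBlocks_mulVec, sumElim_dotProduct_sumElim,
    Matrix.add_mulVec, Matrix.smul_mulVec, Matrix.neg_mulVec, Matrix.mulVec_smul,
    smul_dotProduct, dotProduct_add, dotProduct_smul, add_dotProduct, dotProduct_neg,
    neg_dotProduct, smul_eq_mul, Sum.elim_comp_inl, Sum.elim_comp_inr, Matrix.mulVec_sub, smul_sub, dotProduct_sub,
    Matrix.mul_assoc, Matrix.mulVec_mulVec]
  rw [show (Pᵀ * (K_E⁻¹ * P)) *ᵥ y_C = Pᵀ *ᵥ ((K_E⁻¹ * P) *ᵥ y_C) from (Matrix.mulVec_mulVec ..).symm,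
    show (K_E⁻¹ * P) *ᵥ y_C = K_E⁻¹ *ᵥ (P *ᵥ y_C) from (Matrix.mulVec_mulVec ..).symm,
    show (Pᵀ * K_E⁻¹) *ᵥ y_E = Pᵀ *ᵥ (K_E⁻¹ *ᵥ y_E) from (Matrix.mulVec_mulVec ..).symm]
  rw [show a ⬝ᵥ (Pᵀ *ᵥ (K_E⁻¹ *ᵥ (P *ᵥ y_C))) = (P *ᵥ a) ⬝ᵥ (K_E⁻¹ *ᵥ (P *ᵥ y_C)) by
      rw [dotProduct_mulVec, vecMul_transpose],
    show a ⬝ᵥ (Pᵀ *ᵥ (K_E⁻¹ *ᵥ y_E)) = (P *ᵥ a) ⬝ᵥ (K_E⁻¹ *ᵥ y_E) by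
      rw [dotProduct_mulVec, vecMul_transpose]]
  ring
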